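/- Let L = ℚ(ω, ∛p) for p ≡ 1 (mod 3) prime. Then ∛2 ∉ L, i.e., 2 has no cube root in L. -/

import Mathlib

open Polynomial IntermediateField Module

-- q : a rational with 2-adic valuation not divisible by 3 is not a cube
lemma notcube (q : ℚ) (hq : q ≠ 0) (h3 : ¬ (3 : ℤ) ∣ padicValRat 2 q) :
    ∀ b : ℚ, b ^ 3 ≠ q := by
  intro b hb
  have hb0 : b ≠ 0 := by rintro rfl; rw [zero_pow (by norm_num)] at hb; exact hq hb.symm
  haveI : Fact (Nat.Prime 2) := ⟨Nat.prime_two⟩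
  have h := padicValRat.pow (p := 2) b (k := 3)
  rw [hb] at h
  exact h3 ⟨padicValRat 2 b, by rw [h]; push_cast; ring⟩

lemma val2 (p : ℕ) (hpodd : ¬ 2 ∣ p) (hp0 : p ≠ 0) (j : ℕ) :
    padicValRat 2 (2 / (p : ℚ) ^ j) = 1 := by
  haveI : Fact (Nat.Prime 2) := ⟨Nat.prime_two⟩
  have hpQ : (p : ℚ) ≠ 0 := Nat.cast_ne_zero.mpr hp0
  have hv : padicValRat 2 ((p : ℚ) ^ j) = 0 := by
    rw [padicValRat.pow (p : ℚ)]
    have : padicValRat 2 (p : ℚ) = 0 := by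
      rw [padicValRat.of_nat, padicValNat.eq_zero_of_not_dvd hpodd]
      norm_num
    rw [this]; ring
  rw [padicValRat.div (by norm_num) (pow_ne_zero _ hpQ), hv]
  have h2 : padicValRat 2 ((2 : ℕ) : ℚ) = 1 := padicValRat.self (by norm_num)
  norm_num at h2 ⊢
  exact h2

lemma cube_dvd_finrank {K : Type*} [Field K] [Algebra ℚ K] [FiniteDimensional ℚ K]
    (a : ℚ) (ha : ∀ b : ℚ, b ^ 3 ≠ a) (z : K) (hz : z ^ 3 = algebraMap ℚ K a) :
    3 ∣ finrank ℚ K := by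
  have hirr : Irreducible (X ^ 3 - C a) :=
    X_pow_sub_C_irreducible_of_prime Nat.prime_three ha
  have hroot : aeval z (X ^ 3 - C a) = 0 := by
    simp [hz]
  have hmin : minpoly ℚ z = X ^ 3 - C a :=
    (minpoly.eq_of_irreducible_of_monic hirr hroot (monic_X_pow_sub_C a (by norm_num))).symm
  have hdvd := minpoly.degree_dvd (K := ℚ) (x := z) (IsIntegral.of_finite ℚ z)
  rwa [hmin, natDegree_X_pow_sub_C] at hdvd

set_option maxHeartbeats 1600000 in
/-- For `L = ℚ(ω, ∛p)` with `p ≡ 1 (mod 3)` prime, `2` has no cube root in `L`. -/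
theorem stmt13 (p : ℕ) (hp : p.Prime) (hp3 : p % 3 = 1)
    (L : Type*) [Field L] [NumberField L] (ω c : L)
    (hω : ω ^ 2 + ω + 1 = 0) (hc : c ^ 3 = (p : L))
    (hgen : IntermediateField.adjoin ℚ {ω, c} = ⊤) :
    ¬ ∃ x : L, x ^ 3 = 2 := by
  rintro ⟨x, hx⟩
  -- arithmetic facts about p
  have hp2 : p ≠ 2 := by rintro rfl; norm_num at hp3
  have hpodd : ¬ 2 ∣ p := fun h =>
    hp2 ((Nat.prime_dvd_prime_iff_eq Nat.prime_two hp).mp h).symm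
  have hp0 : p ≠ 0 := hp.ne_zero
  have hpQ : (p : ℚ) ≠ 0 := Nat.cast_ne_zero.mpr hp0
  -- non-cube facts
  have hncube : ∀ j : ℕ, ∀ b : ℚ, b ^ 3 ≠ 2 / (p : ℚ) ^ j := by
    intro j
    refine notcube _ (by positivity) ?_
    rw [val2 p hpodd hp0 j]
    omega
  -- basic element facts
  have hω1 : ω ≠ 1 := by rintro rfl; norm_num at hω
  have hω0 : ω ≠ 0 := by rintro rfl; norm_num at hω
  have hω3 : ω ^ 3 = 1 := by linear_combination (ω - 1) * hω
  have hpL : (p : L) ≠ 0 := Nat.cast_ne_zero.mpr hp0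
  have hc0 : c ≠ 0 := by rintro rfl; rw [zero_pow (by norm_num)] at hc; exact hpL hc.symm
  have hx0 : x ≠ 0 := by rintro rfl; rw [zero_pow (by norm_num)] at hx; norm_num at hx
  -- the field F = ℚ(ω)
  set F : IntermediateField ℚ L := ℚ⟮ω⟯ with hF
  have hωF : ω ∈ F := mem_adjoin_simple_self ℚ ω
  haveI : FiniteDimensional F L := FiniteDimensional.right ℚ F L
  haveI : FiniteDimensional ℚ F := inferInstance
  have hdF : finrank ℚ F ≤ 2 := by
    rw [hF, adjoin.finrank (IsIntegral.of_finite ℚ ω)]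
    have hdvd : minpoly ℚ ω ∣ X ^ 2 + X + C 1 := by
      apply minpoly.dvd
      simp [hω]
    have hne : (X ^ 2 + X + C 1 : ℚ[X]) ≠ 0 := by
      intro h
      have := congrArg (fun q => Polynomial.coeff q 0) h
      simp at this
    calc (minpoly ℚ ω).natDegree ≤ (X ^ 2 + X + C 1 : ℚ[X]).natDegree :=
          natDegree_le_of_dvd hdvd hne
      _ ≤ 2 := by compute_degree
  -- 3 divides [L : ℚ]
  have h3L : 3 ∣ finrank ℚ L := by
    refine cube_dvd_finrank 2 (by simpa using hncube 0) x ?_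
    rw [hx]; simp
  -- F(c) = ⊤
  have htot : F⟮c⟯ = ⊤ := by
    have hsub : IntermediateField.adjoin ℚ {ω, c} ≤ (F⟮c⟯).restrictScalars ℚ := by
      rw [adjoin_le_iff]
      rintro z hz
      simp only [Set.mem_insert_iff, Set.mem_singleton_iff] at hz
      rcases hz with h | h
      · rw [h]; exact (F⟮c⟯).algebraMap_mem ⟨ω, hωF⟩
      · rw [h]; exact mem_adjoin_simple_self F c
    rw [hgen] at hsub
    have : (F⟮c⟯).restrictScalars ℚ = ⊤ := le_antisymm le_top hsub
    apply IntermediateField.restrictScalars_injective ℚ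
    rw [this, IntermediateField.restrictScalars_top]
  -- minpoly of c over F
  have hcint : IsIntegral F c := IsIntegral.of_finite F c
  have hcdvd : minpoly F c ∣ X ^ 3 - C ((p : ℕ) : F) := by
    apply minpoly.dvd
    simp [hc]
  have hXpne : (X ^ 3 - C ((p : ℕ) : F)) ≠ 0 := (monic_X_pow_sub_C _ (by norm_num : 3 ≠ 0)).ne_zero
  have hfl : finrank F L = (minpoly F c).natDegree := by
    rw [← adjoin.finrank hcint, htot, finrank_top']
  have hnd3 : (minpoly F c).natDegree ≤ 3 := by
    have := natDegree_le_of_dvd hcdvd hXpne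
    rwa [natDegree_X_pow_sub_C] at this
  have hmulrank : finrank ℚ F * finrank F L = finrank ℚ L := finrank_mul_finrank ℚ F L
  have hdF1 : 1 ≤ finrank ℚ F := finrank_pos
  have h3nF : 3 ∣ finrank F L := by
    rcases h3L with ⟨k, hk⟩
    rw [← hmulrank] at hk
    interval_cases h : finrank ℚ F <;> omega
  have hnF : finrank F L = 3 := by
    have h1 : 0 < finrank F L := finrank_pos
    omega
  have hmc : minpoly F c = X ^ 3 - C ((p : ℕ) : F) := by
    apply eq_of_dvd_of_natDegree_le_of_leadingCoeff hcdvd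
    · rw [natDegree_X_pow_sub_C, ← hfl, hnF]
    · rw [(minpoly.monic hcint).leadingCoeff, (monic_X_pow_sub_C _ (by norm_num : 3 ≠ 0)).leadingCoeff]
  -- construct σ : L ≃ₐ[F] L with σ c = ω * c
  have hroot2 : aeval (ω * c) (minpoly F c) = 0 := by
    rw [hmc]
    simp only [map_sub, map_pow, aeval_X, aeval_C]
    rw [mul_pow, hω3, hc]
    simp
  let φ0 : AdjoinRoot (minpoly F c) →ₐ[F] L := AdjoinRoot.liftAlgHom _ (Algebra.ofId F L) (ω * c) (by rw [← hroot2]; rfl)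
  let φ : F⟮c⟯ →ₐ[F] L := φ0.comp (adjoinRootEquivAdjoin F hcint).symm
  have hφ : φ (AdjoinSimple.gen F c) = ω * c := by
    have h1 : (adjoinRootEquivAdjoin F hcint).symm (AdjoinSimple.gen F c)
        = AdjoinRoot.root (minpoly F c) := by
      rw [AlgEquiv.symm_apply_eq, adjoinRootEquivAdjoin_apply_root]
    show φ0 ((adjoinRootEquivAdjoin F hcint).symm (AdjoinSimple.gen F c)) = ω * c
    rw [h1]
    exact AdjoinRoot.liftAlgHom_root _ _ _ _
  let ψ : L →ₐ[F] L :=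
    φ.comp ((IntermediateField.equivOfEq htot).symm.toAlgHom.comp
      IntermediateField.topEquiv.symm.toAlgHom)
  have hψc : ψ c = ω * c := by
    have h2 : ((IntermediateField.equivOfEq htot).symm (IntermediateField.topEquiv.symm c))
        = AdjoinSimple.gen F c := by
      apply Subtype.ext
      simp
    show φ ((IntermediateField.equivOfEq htot).symm (IntermediateField.topEquiv.symm c)) = ω * c
    rw [h2, hφ]
  let σ : L ≃ₐ[F] L := AlgEquiv.ofBijective ψ ((Algebra.IsAlgebraic.of_finite F L).algHom_bijective ψ)
  have hσc : σ c = ω * c := hψc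
  -- L is a splitting field of X^3 - p over F, hence Galois
  have hmap : (X ^ 3 - C ((p : ℕ) : F)).map (algebraMap F L)
      = (X - C c) * (X - C (ω * c)) * (X - C (ω ^ 2 * c)) := by
    rw [Polynomial.map_sub, Polynomial.map_pow, map_X, map_C, map_natCast]
    have hωC : (C ω) ^ 2 + C ω + 1 = (0 : L[X]) := by
      rw [← map_pow, ← map_add, ← map_one C, ← map_add, hω]
      simp
    have hcC : (C c) ^ 3 = C ((p : ℕ) : L) := by rw [← map_pow, hc]
    simp only [map_mul, map_pow]
    linear_combination (C c * X ^ 2 - C c ^ 2 * C ω * X + C c ^ 3 * (C ω - 1)) * hωC + hcC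
  have hsplits : Polynomial.Splits ((X ^ 3 - C ((p : ℕ) : F)).map (algebraMap F L)) := by
    rw [hmap]
    exact ((Splits.X_sub_C _).mul (Splits.X_sub_C _)).mul (Splits.X_sub_C _)
  have hcroot : c ∈ (X ^ 3 - C ((p : ℕ) : F)).rootSet L := by
    rw [Polynomial.mem_rootSet]
    refine ⟨hXpne, ?_⟩
    simp [hc]
  haveI hsf : IsSplittingField F L (X ^ 3 - C ((p : ℕ) : F)) := by
    refine ⟨hsplits, ?_⟩
    rw [eq_top_iff, ← IntermediateField.top_toSubalgebra, ← htot,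
      IntermediateField.adjoin_simple_toSubalgebra_of_isAlgebraic hcint.isAlgebraic]
    exact Algebra.adjoin_mono (Set.singleton_subset_iff.mpr hcroot)
  haveI : Normal F L := Normal.of_isSplittingField (X ^ 3 - C ((p : ℕ) : F))
  haveI : IsGalois F L := ⟨⟩
  -- σ generates the Galois group
  have hσ1 : σ ≠ 1 := by
    intro h
    have : σ c = c := by rw [h]; rfl
    rw [hσc] at this
    exact hω1 (by field_simp at this; exact this)
  have hcard : Fintype.card (L ≃ₐ[F] L) = 3 := by
    rw [← Nat.card_eq_fintype_card, IsGalois.card_aut_eq_finrank, hnF]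
  have hzp : Subgroup.zpowers σ = ⊤ := by
    apply Subgroup.eq_top_of_card_eq
    rw [Nat.card_zpowers]
    rw [Nat.card_eq_fintype_card, hcard]
    have h1 : orderOf σ ∣ 3 := by rw [← hcard]; exact orderOf_dvd_card
    have h2 : orderOf σ ≠ 1 := by simpa using hσ1
    have := (Nat.le_of_dvd (by norm_num) h1)
    interval_cases h : orderOf σ <;> omega
  have hfix : fixedField (⊤ : Subgroup (L ≃ₐ[F] L)) = ⊥ := by
    rw [← IntermediateField.fixingSubgroup_bot, IsGalois.fixedField_fixingSubgroup]
  have hfixed : ∀ z : L, σ z = z → ∃ w : F, algebraMap F L w = z := by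
    intro z hz
    have hmem : z ∈ fixedField (⊤ : Subgroup (L ≃ₐ[F] L)) := by
      rintro ⟨τ, hτ⟩
      rw [← hzp] at hτ
      obtain ⟨k, rfl⟩ := hτ
      show (σ ^ k) • z = z
      have hst : σ ∈ MulAction.stabilizer (L ≃ₐ[F] L) z := hz
      have : σ ^ k ∈ MulAction.stabilizer (L ≃ₐ[F] L) z := zpow_mem hst k
      exact this
    rw [hfix] at hmem
    exact (IntermediateField.mem_bot).mp hmem
  -- key contradiction maker
  have hkey : ∀ j : ℕ, ∀ y : L, (∃ w : F, algebraMap F L w = y) →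
      y ^ 3 = 2 / (p : L) ^ j → False := by
    intro j y hw hy
    obtain ⟨w, rfl⟩ := hw
    have hinj : Function.Injective (algebraMap F L) := (algebraMap F L).injective
    have hw3 : w ^ 3 = algebraMap ℚ F (2 / (p : ℚ) ^ j) := by
      apply hinj
      rw [map_pow, hy, ← IsScalarTower.algebraMap_apply ℚ F L]
      rw [map_div₀, map_pow, map_ofNat, map_natCast]
    have h3F : 3 ∣ finrank ℚ F := cube_dvd_finrank _ (hncube j) w hw3
    have := Nat.le_of_dvd (by omega) h3F
    omega
  -- classification of σ x
  have hσx3 : (σ x) ^ 3 = 2 := by rw [← map_pow, hx, map_ofNat]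
  have hcube1 : (σ x / x) ^ 3 = 1 := by
    rw [div_pow, hσx3, hx, div_self (by norm_num)]
  have hclass : σ x / x = 1 ∨ σ x / x = ω ∨ σ x / x = -1 - ω := by
    set t := σ x / x with ht
    have h1 : (t - 1) * (t ^ 2 + t + 1) = 0 := by linear_combination hcube1
    rcases mul_eq_zero.mp h1 with h | h
    · left; linear_combination h
    · have h2 : (t - ω) * (t + 1 + ω) = 0 := by linear_combination h - hω
      rcases mul_eq_zero.mp h2 with h' | h'
      · right; left; linear_combination h'
      · right; right; linear_combination h'
  rcases hclass with h | h | h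
  · -- σ x = x, so x ∈ F, but x^3 = 2
    have hσx : σ x = x := by field_simp at h; exact h
    refine hkey 0 x (hfixed x hσx) ?_
    rw [hx]; simp
  · -- σ x = ω x : consider y = x / c
    have hσx : σ x = ω * x := by field_simp at h; linear_combination h
    have hσy : σ (x / c) = x / c := by
      rw [map_div₀, hσx, hσc]
      rw [mul_div_mul_left _ _ hω0]
    refine hkey 1 (x / c) (hfixed _ hσy) ?_
    rw [div_pow, hx, hc, pow_one]
  · -- σ x = ω² x : consider y = x / c²
    have hσx : σ x = (-1 - ω) * x := by field_simp at h; linear_combination h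
    have hσy : σ (x / c ^ 2) = x / c ^ 2 := by
      rw [map_div₀, hσx, map_pow, hσc, mul_pow]
      have hω2 : ω ^ 2 = -1 - ω := by linear_combination hω
      rw [hω2]
      have hne : (-1 - ω : L) ≠ 0 := by
        intro h0
        have hωm : ω = -1 := by linear_combination -h0
        rw [hωm] at hω
        norm_num at hω
      rw [mul_comm (-1 - ω : L) (c ^ 2), ← mul_div_mul_right _ _ hne]
      field_simp
    refine hkey 2 (x / c ^ 2) (hfixed _ hσy) ?_
    rw [div_pow, hx, ← pow_mul]
    rw [show 2 * 3 = 3 * 2 by ring, pow_mul, hc]
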